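/- Let (A,∘) be a Novikov algebra of dimension ≥ 2 such that every 1/2-derivation of (A,∘) is a scalar multiple of the identity map. Then for any commutative associative product · making (A,·,∘) a transposed Novikov-Poisson algebra, the product · is identically zero. -/
import Mathlib


/-- If a Novikov algebra of dimension ≥ 2 admits only trivial
1/2-derivations (scalar multiples of the identity), then every compatible
transposed Novikov-Poisson structure has zero commutative product. -/
theorem stmt14 {k A : Type*} [Field k] [AddCommGroup A] [Module k A]
    (hchar : (2:k) ≠ 0)
    (hdim : 2 ≤ Module.rank k A)
    (mul cir : A →ₗ[k] A →ₗ[k] A)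
    (hcomm : ∀ x y : A, mul x y = mul y x)
    (hassoc : ∀ x y z : A, mul (mul x y) z = mul x (mul y z))
    (hnov1 : ∀ x y z : A, cir (cir x y) z = cir (cir x z) y)
    (hnov2 : ∀ x y z : A, cir (cir x y) z - cir x (cir y z) = cir (cir y x) z - cir y (cir x z))
    (htnp1 : ∀ x y z : A, cir (mul x y) z = cir (mul x z) y)
    (htnp2 : ∀ x y z : A, (2:k) • mul z (cir x y) = cir (mul z x) y + cir x (mul z y))
    (htriv : ∀ φ : A →ₗ[k] A,
      (∀ x y : A, (2:k) • φ (cir x y) = cir (φ x) y + cir x (φ y)) →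
      ∃ α : k, ∀ x : A, φ x = α • x) :
    ∀ x y : A, mul x y = 0 := by
  -- each `mul z` is a 1/2-derivation, hence a scalar multiple of the identity
  have key : ∀ z : A, ∃ α : k, ∀ w : A, mul z w = α • w := fun z =>
    htriv (mul z) (fun x y => htnp2 x y z)
  intro x y
  obtain ⟨α, hα⟩ := key x
  by_cases hα0 : α = 0
  · rw [hα y, hα0, zero_smul]
  · exfalso
    -- every w is a multiple of x, contradicting rank ≥ 2
    have hle : Module.rank k A ≤ 1 := by
      rw [rank_le_one_iff]
      refine ⟨x, fun w => ?_⟩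
      obtain ⟨β, hβ⟩ := key w
      refine ⟨α⁻¹ * β, ?_⟩
      have : α • w = β • x := by rw [← hα w, hcomm, hβ x]
      rw [mul_smul, ← this, inv_smul_smul₀ hα0]
    have := hdim.trans hle
    norm_num at this
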